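/- Let n ≥ 1, let g = (g₁,…,g_n) ∈ SU(2)^n, fix 1 ≤ j ≤ n, set h = g₁g₂⋯g_j and A = h − h⁻¹. Then for every t ∈ ℝ, the product of the conjugated tuple is unchanged: (exp(tA) g₁ exp(−tA)) · (exp(tA) g₂ exp(−tA)) ⋯ (exp(tA) g_j exp(−tA)) = g₁ g₂ ⋯ g_j. In particular F_j(Φ_jᵗ(g)) = F_j(g) for all t: the quantity F_j is invariant along the bending flow. -/

import Mathlib

open Matrix

/-- `SU2` is the special unitary group of 2×2 complex matrices,
identified with the 3-sphere `S³`. -/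
abbrev SU2 : Submonoid (Matrix (Fin 2) (Fin 2) ℂ) := Matrix.specialUnitaryGroup (Fin 2) ℂ

noncomputable instance : Group SU2 :=
  { (inferInstance : Monoid SU2) with
    inv := fun A => ⟨star A.1, by
      obtain ⟨hu, hd⟩ := Matrix.mem_specialUnitaryGroup_iff.mp A.2
      refine Matrix.mem_specialUnitaryGroup_iff.mpr ⟨Unitary.star_mem hu, ?_⟩
      rw [Matrix.star_eq_conjTranspose, Matrix.det_conjTranspose, hd, star_one]⟩
    inv_mul_cancel := fun A => Subtype.ext A.2.1.1 }

lemma conj_list_prod (E E' : Matrix (Fin 2) (Fin 2) ℂ) (hEE' : E * E' = 1) (hE'E : E' * E = 1)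
    (l : List SU2) :
    (l.map (fun x : SU2 => E * (x : Matrix (Fin 2) (Fin 2) ℂ) * E')).prod
      = E * ((l.prod : SU2) : Matrix (Fin 2) (Fin 2) ℂ) * E' := by
  induction l with
  | nil => simp [hEE']
  | cons a l ih =>
      simp only [List.map_cons, List.prod_cons, ih, Submonoid.coe_mul]
      simp only [mul_assoc]
      rw [← mul_assoc E' E, hE'E, one_mul]
/-- The product `g₁⋯g_j` (hence `F_j(g) = h − h⁻¹`) is invariant along the bending flow:
conjugating each of the first `j` entries by `exp(tA)`, `A = h − h⁻¹`, leaves the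
product unchanged. -/
theorem bending_flow_preserves_product (n : ℕ) (hn : 1 ≤ n) (g : Fin n → SU2)
    (j : ℕ) (hj1 : 1 ≤ j) (hjn : j ≤ n)
    (h : SU2) (hh : h = ((List.ofFn g).take j).prod)
    (A : Matrix (Fin 2) (Fin 2) ℂ)
    (hA : A = (h : Matrix (Fin 2) (Fin 2) ℂ) - ((h⁻¹ : SU2) : Matrix (Fin 2) (Fin 2) ℂ))
    (t : ℝ) :
    (((List.ofFn g).take j).map (fun x : SU2 =>
        NormedSpace.exp (t • A) * (x : Matrix (Fin 2) (Fin 2) ℂ)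
          * NormedSpace.exp (-(t • A)))).prod
      = (h : Matrix (Fin 2) (Fin 2) ℂ) ∧
    NormedSpace.exp (t • A) * (h : Matrix (Fin 2) (Fin 2) ℂ) * NormedSpace.exp (-(t • A))
      = (h : Matrix (Fin 2) (Fin 2) ℂ) := by
  have hc : Commute (t • A) (-(t • A)) := (Commute.refl _).neg_right
  have hEE' : NormedSpace.exp (t • A) * NormedSpace.exp (-(t • A)) = 1 := by
    have h2 := Matrix.exp_add_of_commute (t • A) (-(t • A)) hc
    rw [add_neg_cancel, NormedSpace.exp_zero] at h2
    exact h2.symm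
  have hE'E : NormedSpace.exp (-(t • A)) * NormedSpace.exp (t • A) = 1 := by
    have h2 := Matrix.exp_add_of_commute (-(t • A)) (t • A) hc.symm
    rw [neg_add_cancel, NormedSpace.exp_zero] at h2
    exact h2.symm
  have hinv1 : ((h⁻¹ : SU2) : Matrix (Fin 2) (Fin 2) ℂ) * (h : Matrix (Fin 2) (Fin 2) ℂ) = 1 :=
    congrArg Subtype.val (inv_mul_cancel h)
  have hinv2 : (h : Matrix (Fin 2) (Fin 2) ℂ) * ((h⁻¹ : SU2) : Matrix (Fin 2) (Fin 2) ℂ) = 1 :=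
    congrArg Subtype.val (mul_inv_cancel h)
  have hcomm : Commute (h : Matrix (Fin 2) (Fin 2) ℂ) A := by
    unfold Commute SemiconjBy
    rw [hA, mul_sub, sub_mul, hinv1, hinv2]
  have hcommE : Commute (h : Matrix (Fin 2) (Fin 2) ℂ) (NormedSpace.exp (t • A)) :=
    (hcomm.smul_right t).exp_right
  have key : NormedSpace.exp (t • A) * (h : Matrix (Fin 2) (Fin 2) ℂ)
      * NormedSpace.exp (-(t • A)) = (h : Matrix (Fin 2) (Fin 2) ℂ) := by
    rw [← hcommE.eq, mul_assoc, hEE', mul_one]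
  refine ⟨?_, key⟩
  rw [conj_list_prod _ _ hEE' hE'E, ← hh, key]
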